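/- The WLSE function is equivalent to the maximum operator as ρ goes to infinity: let w : Fin n → ℝ satisfy w i ≥ 0 for all i and Σ_i w i = 1, let x : Fin n → ℝ, and suppose there exists an index m with x m = max_i x i and w m > 0. Then WLSE_{ρ,w}(x) tends to max_i x i as ρ → ∞. -/

import Mathlib

/-- The weighted LogSumExp function: `WLSE ρ w x = (1/ρ) * log (∑ i, w i * exp (ρ * x i))`. -/
noncomputable def WLSE {n : ℕ} (ρ : ℝ) (w x : Fin n → ℝ) : ℝ :=
  (1 / ρ) * Real.log (∑ i, w i * Real.exp (ρ * x i))

/-- The WLSE function is equivalent to the maximum operator as ρ goes to infinity: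
if some maximizing index `m` has `w m > 0`, then `WLSE ρ w x → max_i x i` as `ρ → ∞`. -/
theorem wlse_tendsto_max {n : ℕ} (hn : 1 ≤ n)
    (w : Fin n → ℝ) (hw0 : ∀ i, 0 ≤ w i) (hw1 : ∑ i, w i = 1)
    (x : Fin n → ℝ)
    (hm : ∃ m : Fin n,
      x m = Finset.univ.sup' (Finset.univ_nonempty_iff.mpr ⟨⟨0, hn⟩⟩) x ∧ 0 < w m) :
    Filter.Tendsto (fun ρ : ℝ => WLSE ρ w x) Filter.atTop
      (nhds (Finset.univ.sup' (Finset.univ_nonempty_iff.mpr ⟨⟨0, hn⟩⟩) x)) := by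
  obtain ⟨m, hxm, hwm⟩ := hm
  set M : ℝ := Finset.univ.sup' (Finset.univ_nonempty_iff.mpr ⟨⟨0, hn⟩⟩) x with hM
  have hle : ∀ i, x i ≤ M := fun i => Finset.le_sup' x (Finset.mem_univ i)
  set S : ℝ → ℝ := fun ρ => ∑ i, w i * Real.exp (ρ * (x i - M)) with hS
  have hS_lb : ∀ ρ : ℝ, w m ≤ S ρ := by
    intro ρ
    have : w m * Real.exp (ρ * (x m - M)) ≤ S ρ := by
      apply Finset.single_le_sum (f := fun i => w i * Real.exp (ρ * (x i - M)))
        (fun i _ => mul_nonneg (hw0 i) (Real.exp_pos _).le) (Finset.mem_univ m)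
    simpa [hxm] using this
  have hS_ub : ∀ ρ : ℝ, 0 ≤ ρ → S ρ ≤ 1 := by
    intro ρ hρ
    calc S ρ ≤ ∑ i, w i * 1 := by
          apply Finset.sum_le_sum
          intro i _
          apply mul_le_mul_of_nonneg_left _ (hw0 i)
          rw [Real.exp_le_one_iff]
          exact mul_nonpos_of_nonneg_of_nonpos hρ (by linarith [hle i])
      _ = 1 := by simp [hw1]
  have hS_pos : ∀ ρ : ℝ, 0 < S ρ := fun ρ => lt_of_lt_of_le hwm (hS_lb ρ)
  -- eventual equality
  have hkey : ∀ ρ : ℝ, 0 < ρ → WLSE ρ w x = M + (1 / ρ) * Real.log (S ρ) := by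
    intro ρ hρ
    have hexp : ∀ i, w i * Real.exp (ρ * x i)
        = Real.exp (ρ * M) * (w i * Real.exp (ρ * (x i - M))) := by
      intro i
      rw [mul_sub, Real.exp_sub]
      field_simp
    unfold WLSE
    rw [show (∑ i, w i * Real.exp (ρ * x i)) = Real.exp (ρ * M) * S ρ by
      rw [Finset.mul_sum]; exact Finset.sum_congr rfl fun i _ => hexp i]
    rw [Real.log_mul (Real.exp_pos _).ne' (hS_pos ρ).ne', Real.log_exp]
    field_simp
  have hlog0 : Filter.Tendsto (fun ρ : ℝ => (1 / ρ) * Real.log (S ρ))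
      Filter.atTop (nhds 0) := by
    have hlow : Filter.Tendsto (fun ρ : ℝ => (1 / ρ) * Real.log (w m))
        Filter.atTop (nhds 0) := by
      simpa using (tendsto_inv_atTop_zero (𝕜 := ℝ)).mul_const (Real.log (w m))
    apply tendsto_of_tendsto_of_tendsto_of_le_of_le' hlow tendsto_const_nhds
    · filter_upwards [Filter.eventually_gt_atTop (0 : ℝ)] with ρ hρ
      exact mul_le_mul_of_nonneg_left (Real.log_le_log hwm (hS_lb ρ))
        (by positivity)
    · filter_upwards [Filter.eventually_gt_atTop (0 : ℝ)] with ρ hρ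
      have : Real.log (S ρ) ≤ 0 := Real.log_nonpos (hS_pos ρ).le (hS_ub ρ hρ.le)
      exact mul_nonpos_of_nonneg_of_nonpos (by positivity) this
  have : Filter.Tendsto (fun ρ : ℝ => M + (1 / ρ) * Real.log (S ρ))
      Filter.atTop (nhds M) := by
    simpa using (tendsto_const_nhds (x := M) (f := Filter.atTop (α := ℝ))).add hlog0
  refine this.congr' ?_
  filter_upwards [Filter.eventually_gt_atTop (0 : ℝ)] with ρ hρ
  exact (hkey ρ hρ).symm
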